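/- Let Ω ⊆ ℝ^5 be open and let u, v, w : Ω → ℝ be smooth. On Ω × (ℝ \ {0}) (with coordinates x^1,…,x^5, λ) define the vector fields Y₁ = λ∂₁ − u₁∂₃ − v₁∂₄ + λw₁∂_λ, Y₂ = λ∂₂ − u₂∂₃ − v₂∂₄ + λw₂∂_λ, Y₃ = ∂₅ + u₄∂₃ + (v₄ + w − λ)∂₄ − λw₄∂_λ. Then the brackets [Y_a, Y_b](x, λ) lie in the linear span of {Y₁(x,λ), Y₂(x,λ), Y₃(x,λ)} for all a, b ∈ {1,2,3}, every x ∈ Ω and every λ ≠ 0, if and only if the following nine equations hold on Ω: R₁(u) = u₁w₂ − u₂w₁, R₁(v) = v₁w₂ − v₂w₁, R₁(w) = 0, R₂(u) = u₁w₄, R₂(v) = −u₁w₃, R₂(w) = w₁w₄, R₃(u) = u₂w₄, R₃(v) = −u₂w₃, R₃(w) = w₂w₄, where R₁ = u₁∂₂∂₃ + v₁∂₂∂₄ − u₂∂₁∂₃ − v₂∂₁∂₄, R₂ = u₁∂₃∂₄ + v₁∂₄² − ∂₁∂₅ − u₄∂₁∂₃ − (v₄+w)∂₁∂₄, R₃ =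 u₂∂₃∂₄ + v₂∂₄² − ∂₂∂₅ − u₄∂₂∂₃ − (v₄+w)∂₂∂₄. -/

import Mathlib

/-- The `i`-th standard coordinate (basis) vector of `ℝᵐ`. -/
noncomputable def e (m : ℕ) (i : Fin m) : Fin m → ℝ := Pi.single i 1

/-- Partial derivative `∂f/∂xⁱ` of a scalar function on `ℝᵐ`. -/
noncomputable def pd (m : ℕ) (f : (Fin m → ℝ) → ℝ) (i : Fin m) (x : Fin m → ℝ) : ℝ :=
  fderiv ℝ f x (e m i)

/-- Second partial derivative `∂²f/∂xⁱ∂xʲ`. -/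
noncomputable def pd2 (m : ℕ) (f : (Fin m → ℝ) → ℝ) (i j : Fin m) (x : Fin m → ℝ) : ℝ :=
  pd m (fun y => pd m f i y) j x

/-- Lie bracket of vector fields on (an open subset of) `ℝᵐ`:
`[X,Y](x) = DY(x)·X(x) − DX(x)·Y(x)`. -/
noncomputable def vbr (m : ℕ) (X Y : (Fin m → ℝ) → (Fin m → ℝ)) (x : Fin m → ℝ) :
    Fin m → ℝ :=
  fderiv ℝ Y x (X x) - fderiv ℝ X x (Y x)

/-- Projection from `ℝ⁶ = Ω × (ℝ∖{0})` (coordinates `x¹,…,x⁵,λ`) to `ℝ⁵`. -/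
noncomputable def proj56 (z : Fin 6 → ℝ) : Fin 5 → ℝ := fun i => z i.castSucc

/-- The Lax fields `Y₁ = λ∂₁ − u₁∂₃ − v₁∂₄ + λw₁∂_λ`,
`Y₂ = λ∂₂ − u₂∂₃ − v₂∂₄ + λw₂∂_λ`, `Y₃ = ∂₅ + u₄∂₃ + (v₄+w−λ)∂₄ − λw₄∂_λ`
(coordinates `x¹,…,x⁵` indexed by `0,…,4`, `λ` by `5`). -/
noncomputable def Yf (u v w : (Fin 5 → ℝ) → ℝ) :
    Fin 3 → (Fin 6 → ℝ) → (Fin 6 → ℝ) :=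
  ![fun z => z 5 • e 6 0 - pd 5 u 0 (proj56 z) • e 6 2 - pd 5 v 0 (proj56 z) • e 6 3
      + (z 5 * pd 5 w 0 (proj56 z)) • e 6 5,
    fun z => z 5 • e 6 1 - pd 5 u 1 (proj56 z) • e 6 2 - pd 5 v 1 (proj56 z) • e 6 3
      + (z 5 * pd 5 w 1 (proj56 z)) • e 6 5,
    fun z => e 6 4 + pd 5 u 3 (proj56 z) • e 6 2
      + (pd 5 v 3 (proj56 z) + w (proj56 z) - z 5) • e 6 3
      - (z 5 * pd 5 w 3 (proj56 z)) • e 6 5]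

/-- `R₁ = u₁∂₂∂₃ + v₁∂₂∂₄ − u₂∂₁∂₃ − v₂∂₁∂₄`. -/
noncomputable def R1op (u v f : (Fin 5 → ℝ) → ℝ) (x : Fin 5 → ℝ) : ℝ :=
  pd 5 u 0 x * pd2 5 f 1 2 x + pd 5 v 0 x * pd2 5 f 1 3 x
  - pd 5 u 1 x * pd2 5 f 0 2 x - pd 5 v 1 x * pd2 5 f 0 3 x

/-- `R₂ = u₁∂₃∂₄ + v₁∂₄² − ∂₁∂₅ − u₄∂₁∂₃ − (v₄+w)∂₁∂₄`. -/
noncomputable def R2op (u v w f : (Fin 5 → ℝ) → ℝ) (x : Fin 5 → ℝ) : ℝ :=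
  pd 5 u 0 x * pd2 5 f 2 3 x + pd 5 v 0 x * pd2 5 f 3 3 x - pd2 5 f 0 4 x
  - pd 5 u 3 x * pd2 5 f 0 2 x - (pd 5 v 3 x + w x) * pd2 5 f 0 3 x

/-- `R₃ = u₂∂₃∂₄ + v₂∂₄² − ∂₂∂₅ − u₄∂₂∂₃ − (v₄+w)∂₂∂₄`. -/
noncomputable def R3op (u v w f : (Fin 5 → ℝ) → ℝ) (x : Fin 5 → ℝ) : ℝ :=
  pd 5 u 1 x * pd2 5 f 2 3 x + pd 5 v 1 x * pd2 5 f 3 3 x - pd2 5 f 1 4 x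
  - pd 5 u 3 x * pd2 5 f 1 2 x - (pd 5 v 3 x + w x) * pd2 5 f 1 3 x


noncomputable def projL : (Fin 6 → ℝ) →L[ℝ] (Fin 5 → ℝ) :=
  ContinuousLinearMap.pi fun i : Fin 5 => ContinuousLinearMap.proj i.castSucc

lemma projL_apply (z : Fin 6 → ℝ) : projL z = proj56 z := rfl

lemma fderiv_pd (f : (Fin 5 → ℝ) → ℝ) (x : Fin 5 → ℝ) (i j : Fin 5) :
    fderiv ℝ (pd 5 f i) x (e 5 j) = pd2 5 f i j x := rfl

lemma pd_contDiffAt {f : (Fin 5 → ℝ) → ℝ} {x : Fin 5 → ℝ}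
    (hf : ContDiffAt ℝ (⊤:ℕ∞) f x) (i : Fin 5) :
    ContDiffAt ℝ (⊤:ℕ∞) (pd 5 f i) x := by
  have h1 : ContDiffAt ℝ (⊤:ℕ∞) (fderiv ℝ f) x := hf.fderiv_right le_rfl
  exact h1.continuousLinearMap_comp (ContinuousLinearMap.apply ℝ ℝ (e 5 i))

lemma pd2_symm {f : (Fin 5 → ℝ) → ℝ} {x : Fin 5 → ℝ}
    (hf : ContDiffAt ℝ (⊤:ℕ∞) f x) (i j : Fin 5) :
    pd2 5 f i j x = pd2 5 f j i x := by
  have hsym : IsSymmSndFDerivAt ℝ f x := hf.isSymmSndFDerivAt (by rw [minSmoothness_of_isRCLikeNormedField]; exact WithTop.coe_le_coe.2 (le_top : (2:ℕ∞) ≤ ⊤))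
  have h1 : ContDiffAt ℝ (⊤:ℕ∞) (fderiv ℝ f) x := hf.fderiv_right le_rfl
  have hdf : DifferentiableAt ℝ (fderiv ℝ f) x := h1.differentiableAt (by norm_cast)
  have key : ∀ i j : Fin 5, pd2 5 f i j x = fderiv ℝ (fderiv ℝ f) x (e 5 j) (e 5 i) := by
    intro i j
    have h0 : pd2 5 f i j x = fderiv ℝ (fun y => (fderiv ℝ f y) (e 5 i)) x (e 5 j) := rfl
    rw [h0, fderiv_clm_apply hdf (differentiableAt_const _)]
    simp
  rw [key i j, key j i, hsym (e 5 j) (e 5 i)]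

noncomputable def P5 : (Fin 6 → ℝ) →L[ℝ] ℝ := ContinuousLinearMap.proj 5
noncomputable def Lc (f : (Fin 5 → ℝ) → ℝ) (i : Fin 5) (x : Fin 5 → ℝ) :
    (Fin 6 → ℝ) →L[ℝ] ℝ := (fderiv ℝ (pd 5 f i) x).comp projL
noncomputable def L0 (f : (Fin 5 → ℝ) → ℝ) (x : Fin 5 → ℝ) :
    (Fin 6 → ℝ) →L[ℝ] ℝ := (fderiv ℝ f x).comp projL

lemma projL_sum (y : Fin 6 → ℝ) : projL y = ∑ k : Fin 5, y k.castSucc • e 5 k := by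
  funext j
  simp [projL, e, Finset.sum_apply, Pi.single_apply]

lemma Lc_apply (f : (Fin 5 → ℝ) → ℝ) (i : Fin 5) (x : Fin 5 → ℝ) (y : Fin 6 → ℝ) :
    Lc f i x y = ∑ k : Fin 5, y k.castSucc * pd2 5 f i k x := by
  rw [Lc, ContinuousLinearMap.comp_apply, projL_sum, map_sum]
  simp only [map_smul, fderiv_pd, smul_eq_mul]

lemma L0_apply (f : (Fin 5 → ℝ) → ℝ) (x : Fin 5 → ℝ) (y : Fin 6 → ℝ) :
    L0 f x y = ∑ k : Fin 5, y k.castSucc * pd 5 f k x := by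
  rw [L0, ContinuousLinearMap.comp_apply, projL_sum, map_sum]
  simp only [map_smul, smul_eq_mul]
  rfl

lemma hasFDerivAt_pdc {f : (Fin 5 → ℝ) → ℝ} (z : Fin 6 → ℝ)
    (hf : ContDiffAt ℝ (⊤:ℕ∞) f (proj56 z)) (i : Fin 5) :
    HasFDerivAt (fun z => pd 5 f i (proj56 z)) (Lc f i (proj56 z)) z :=
  (((pd_contDiffAt hf i).differentiableAt (by norm_cast)).hasFDerivAt).comp z projL.hasFDerivAt

lemma hasFDerivAt_w0 {f : (Fin 5 → ℝ) → ℝ} (z : Fin 6 → ℝ)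
    (hf : ContDiffAt ℝ (⊤:ℕ∞) f (proj56 z)) :
    HasFDerivAt (fun z => f (proj56 z)) (L0 f (proj56 z)) z :=
  ((hf.differentiableAt (by norm_cast)).hasFDerivAt).comp z projL.hasFDerivAt

noncomputable def DY (u v w : (Fin 5 → ℝ) → ℝ) (x : Fin 5 → ℝ) (t : ℝ) :
    Fin 3 → (Fin 6 → ℝ) →L[ℝ] (Fin 6 → ℝ) :=
  ![P5.smulRight (e 6 0) - (Lc u 0 x).smulRight (e 6 2) - (Lc v 0 x).smulRight (e 6 3)
      + (t • Lc w 0 x + pd 5 w 0 x • P5).smulRight (e 6 5),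
    P5.smulRight (e 6 1) - (Lc u 1 x).smulRight (e 6 2) - (Lc v 1 x).smulRight (e 6 3)
      + (t • Lc w 1 x + pd 5 w 1 x • P5).smulRight (e 6 5),
    (Lc u 3 x).smulRight (e 6 2) + (Lc v 3 x + L0 w x - P5).smulRight (e 6 3)
      - (t • Lc w 3 x + pd 5 w 3 x • P5).smulRight (e 6 5)]

variable {u v w : (Fin 5 → ℝ) → ℝ} {z : Fin 6 → ℝ}

lemma h5' (z : Fin 6 → ℝ) : HasFDerivAt (fun z : Fin 6 → ℝ => z 5) P5 z := by
  have h := (P5).hasFDerivAt (x := z)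
  exact h

lemma hasFDerivAt_Yf0 (hu : ContDiffAt ℝ (⊤:ℕ∞) u (proj56 z))
    (hv : ContDiffAt ℝ (⊤:ℕ∞) v (proj56 z)) (hw : ContDiffAt ℝ (⊤:ℕ∞) w (proj56 z)) :
    HasFDerivAt (Yf u v w 0) (DY u v w (proj56 z) (z 5) 0) z := by
  have h := ((((h5' z).smul_const (e 6 0)).sub
      ((hasFDerivAt_pdc z hu 0).smul_const (e 6 2))).sub
      ((hasFDerivAt_pdc z hv 0).smul_const (e 6 3))).add
      (((h5' z).mul (hasFDerivAt_pdc z hw 0)).smul_const (e 6 5))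
  simp only [Yf, DY, Matrix.cons_val_zero]
  exact h

lemma hasFDerivAt_Yf1 (hu : ContDiffAt ℝ (⊤:ℕ∞) u (proj56 z))
    (hv : ContDiffAt ℝ (⊤:ℕ∞) v (proj56 z)) (hw : ContDiffAt ℝ (⊤:ℕ∞) w (proj56 z)) :
    HasFDerivAt (Yf u v w 1) (DY u v w (proj56 z) (z 5) 1) z := by
  have h := ((((h5' z).smul_const (e 6 1)).sub
      ((hasFDerivAt_pdc z hu 1).smul_const (e 6 2))).sub
      ((hasFDerivAt_pdc z hv 1).smul_const (e 6 3))).add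
      (((h5' z).mul (hasFDerivAt_pdc z hw 1)).smul_const (e 6 5))
  simp only [Yf, DY, Matrix.cons_val_one, Matrix.head_cons, Matrix.cons_val_zero]
  exact h

lemma hasFDerivAt_Yf2 (hu : ContDiffAt ℝ (⊤:ℕ∞) u (proj56 z))
    (hv : ContDiffAt ℝ (⊤:ℕ∞) v (proj56 z)) (hw : ContDiffAt ℝ (⊤:ℕ∞) w (proj56 z)) :
    HasFDerivAt (Yf u v w 2) (DY u v w (proj56 z) (z 5) 2) z := by
  have h := (((hasFDerivAt_const (e 6 4) z).add
      ((hasFDerivAt_pdc z hu 3).smul_const (e 6 2))).add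
      ((((hasFDerivAt_pdc z hv 3).add (hasFDerivAt_w0 z hw)).sub (h5' z)).smul_const (e 6 3))).sub
      (((h5' z).mul (hasFDerivAt_pdc z hw 3)).smul_const (e 6 5))
  simp only [Yf, DY, Matrix.cons_val_two, Matrix.tail_cons, Matrix.head_cons, Matrix.cons_val_zero, Matrix.cons_val_one]
  rw [zero_add] at h
  exact h



@[simp] lemma cs0 : Fin.castSucc (0 : Fin 5) = (0 : Fin 6) := rfl
@[simp] lemma cs1 : Fin.castSucc (1 : Fin 5) = (1 : Fin 6) := rfl
@[simp] lemma cs2 : Fin.castSucc (2 : Fin 5) = (2 : Fin 6) := rfl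
@[simp] lemma cs3 : Fin.castSucc (3 : Fin 5) = (3 : Fin 6) := rfl
@[simp] lemma cs4 : Fin.castSucc (4 : Fin 5) = (4 : Fin 6) := rfl
@[simp] lemma P5_apply (y : Fin 6 → ℝ) : P5 y = y 5 := rfl

lemma br01 (hu : ContDiffAt ℝ (⊤:ℕ∞) u (proj56 z))
    (hv : ContDiffAt ℝ (⊤:ℕ∞) v (proj56 z)) (hw : ContDiffAt ℝ (⊤:ℕ∞) w (proj56 z)) :
    vbr 6 (Yf u v w 0) (Yf u v w 1) z =
      (R1op u v u (proj56 z) - (pd 5 u 0 (proj56 z) * pd 5 w 1 (proj56 z)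
          - pd 5 u 1 (proj56 z) * pd 5 w 0 (proj56 z))) • e 6 2
      + (R1op u v v (proj56 z) - (pd 5 v 0 (proj56 z) * pd 5 w 1 (proj56 z)
          - pd 5 v 1 (proj56 z) * pd 5 w 0 (proj56 z))) • e 6 3
      + (-(z 5 * R1op u v w (proj56 z))) • e 6 5
      + pd 5 w 0 (proj56 z) • Yf u v w 1 z - pd 5 w 1 (proj56 z) • Yf u v w 0 z := by
  rw [vbr, (hasFDerivAt_Yf0 hu hv hw).fderiv, (hasFDerivAt_Yf1 hu hv hw).fderiv]
  funext j
  fin_cases j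
  · simp [DY, Yf, Lc_apply, L0_apply, Fin.sum_univ_five, e]; ring
  · simp [DY, Yf, Lc_apply, L0_apply, Fin.sum_univ_five, e]; ring
  · simp [DY, Yf, Lc_apply, L0_apply, Fin.sum_univ_five, e, R1op]
    linear_combination (z 5) * pd2_symm hu 0 1
  · simp [DY, Yf, Lc_apply, L0_apply, Fin.sum_univ_five, e, R1op]
    linear_combination (z 5) * pd2_symm hv 0 1
  · simp [DY, Yf, Lc_apply, L0_apply, Fin.sum_univ_five, e]
  · simp [DY, Yf, Lc_apply, L0_apply, Fin.sum_univ_five, e, R1op]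
    linear_combination (z 5)^2 * pd2_symm hw 1 0

lemma br02 (hu : ContDiffAt ℝ (⊤:ℕ∞) u (proj56 z))
    (hv : ContDiffAt ℝ (⊤:ℕ∞) v (proj56 z)) (hw : ContDiffAt ℝ (⊤:ℕ∞) w (proj56 z)) :
    vbr 6 (Yf u v w 0) (Yf u v w 2) z =
      (pd 5 u 0 (proj56 z) * pd 5 w 3 (proj56 z) - R2op u v w u (proj56 z)) • e 6 2
      + (-(R2op u v w v (proj56 z)) - pd 5 u 0 (proj56 z) * pd 5 w 2 (proj56 z)) • e 6 3
      + (z 5 * (R2op u v w w (proj56 z) - pd 5 w 0 (proj56 z) * pd 5 w 3 (proj56 z))) • e 6 5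
      + pd 5 w 3 (proj56 z) • Yf u v w 0 z := by
  rw [vbr, (hasFDerivAt_Yf0 hu hv hw).fderiv, (hasFDerivAt_Yf2 hu hv hw).fderiv]
  funext j
  fin_cases j
  · simp [DY, Yf, Lc_apply, L0_apply, Fin.sum_univ_five, e]; ring
  · simp [DY, Yf, Lc_apply, L0_apply, Fin.sum_univ_five, e]
  · simp [DY, Yf, Lc_apply, L0_apply, Fin.sum_univ_five, e, R2op]
    linear_combination (z 5) * pd2_symm hu 3 0 + pd 5 u 0 (proj56 z) * pd2_symm hu 2 3
  · simp [DY, Yf, Lc_apply, L0_apply, Fin.sum_univ_five, e, R2op]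
    linear_combination (z 5) * pd2_symm hv 3 0 + pd 5 u 0 (proj56 z) * pd2_symm hv 2 3
  · simp [DY, Yf, Lc_apply, L0_apply, Fin.sum_univ_five, e]
  · simp [DY, Yf, Lc_apply, L0_apply, Fin.sum_univ_five, e, R2op]
    linear_combination -(z 5)^2 * pd2_symm hw 3 0 - (z 5) * pd 5 u 0 (proj56 z) * pd2_symm hw 2 3


lemma br12 (hu : ContDiffAt ℝ (⊤:ℕ∞) u (proj56 z))
    (hv : ContDiffAt ℝ (⊤:ℕ∞) v (proj56 z)) (hw : ContDiffAt ℝ (⊤:ℕ∞) w (proj56 z)) :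
    vbr 6 (Yf u v w 1) (Yf u v w 2) z =
      (pd 5 u 1 (proj56 z) * pd 5 w 3 (proj56 z) - R3op u v w u (proj56 z)) • e 6 2
      + (-(R3op u v w v (proj56 z)) - pd 5 u 1 (proj56 z) * pd 5 w 2 (proj56 z)) • e 6 3
      + (z 5 * (R3op u v w w (proj56 z) - pd 5 w 1 (proj56 z) * pd 5 w 3 (proj56 z))) • e 6 5
      + pd 5 w 3 (proj56 z) • Yf u v w 1 z := by
  rw [vbr, (hasFDerivAt_Yf1 hu hv hw).fderiv, (hasFDerivAt_Yf2 hu hv hw).fderiv]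
  funext j
  fin_cases j
  · simp [DY, Yf, Lc_apply, L0_apply, Fin.sum_univ_five, e]
  · simp [DY, Yf, Lc_apply, L0_apply, Fin.sum_univ_five, e]; ring
  · simp [DY, Yf, Lc_apply, L0_apply, Fin.sum_univ_five, e, R3op]
    linear_combination (z 5) * pd2_symm hu 3 1 + pd 5 u 1 (proj56 z) * pd2_symm hu 2 3
  · simp [DY, Yf, Lc_apply, L0_apply, Fin.sum_univ_five, e, R3op]
    linear_combination (z 5) * pd2_symm hv 3 1 + pd 5 u 1 (proj56 z) * pd2_symm hv 2 3
  · simp [DY, Yf, Lc_apply, L0_apply, Fin.sum_univ_five, e]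
  · simp [DY, Yf, Lc_apply, L0_apply, Fin.sum_univ_five, e, R3op]
    linear_combination -(z 5)^2 * pd2_symm hw 3 1 - (z 5) * pd 5 u 1 (proj56 z) * pd2_symm hw 2 3


lemma vbr_self (m : ℕ) (X : (Fin m → ℝ) → (Fin m → ℝ)) (x : Fin m → ℝ) :
    vbr m X X x = 0 := sub_self _

lemma vbr_swap (m : ℕ) (X Y : (Fin m → ℝ) → (Fin m → ℝ)) (x : Fin m → ℝ) :
    vbr m X Y x = -(vbr m Y X x) := by simp [vbr]

lemma resid_zero {t : ℝ} (ht : t ≠ 0) {Y0 Y1 Y2 r : Fin 6 → ℝ}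
    (hY00 : Y0 0 = t) (hY01 : Y0 1 = 0) (hY04 : Y0 4 = 0)
    (hY10 : Y1 0 = 0) (hY11 : Y1 1 = t) (hY14 : Y1 4 = 0)
    (hY20 : Y2 0 = 0) (hY21 : Y2 1 = 0) (hY24 : Y2 4 = 1)
    (hr : r ∈ Submodule.span ℝ ({Y0, Y1, Y2} : Set (Fin 6 → ℝ)))
    (h0 : r 0 = 0) (h1 : r 1 = 0) (h4 : r 4 = 0) : r = 0 := by
  rcases Submodule.mem_span_insert.1 hr with ⟨a, y, hy, rfl⟩
  rcases Submodule.mem_span_insert.1 hy with ⟨b, y2, hy2, rfl⟩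
  rcases Submodule.mem_span_singleton.1 hy2 with ⟨c, rfl⟩
  have e4 := h4; have e0 := h0; have e1 := h1
  simp only [Pi.add_apply, Pi.smul_apply, hY00, hY01, hY04, hY10, hY11, hY14,
    hY20, hY21, hY24, smul_eq_mul, mul_zero, mul_one, zero_add, add_zero] at e0 e1 e4
  have hc : c = 0 := by linarith
  have ha : a = 0 := (mul_eq_zero.1 e0).resolve_right ht
  have hb : b = 0 := (mul_eq_zero.1 e1).resolve_right ht
  simp [ha, hb, hc]

@[simp] lemma Yf_comp (u v w : (Fin 5 → ℝ) → ℝ) (z : Fin 6 → ℝ) :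
    (Yf u v w 0 z 0 = z 5 ∧ Yf u v w 0 z 1 = 0 ∧ Yf u v w 0 z 4 = 0) ∧
    (Yf u v w 1 z 0 = 0 ∧ Yf u v w 1 z 1 = z 5 ∧ Yf u v w 1 z 4 = 0) ∧
    (Yf u v w 2 z 0 = 0 ∧ Yf u v w 2 z 1 = 0 ∧ Yf u v w 2 z 4 = 1) := by
  refine ⟨⟨?_, ?_, ?_⟩, ⟨?_, ?_, ?_⟩, ⟨?_, ?_, ?_⟩⟩ <;>
    simp only [Yf, Matrix.cons_val_zero, Matrix.cons_val_one, Matrix.head_cons,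
      Matrix.cons_val_two, Matrix.tail_cons, Pi.add_apply, Pi.sub_apply, Pi.smul_apply,
      e, Pi.single_apply, smul_eq_mul] <;>
    simp


set_option maxHeartbeats 1000000

/-- Theorem 2 (Lax content): the distribution `⟨Y₁,Y₂,Y₃⟩` is involutive iff the
system (alttriple) of the hierarchy of conformal self-duality equations holds. -/
theorem stmt_11 (Ω : Set (Fin 5 → ℝ)) (hΩ : IsOpen Ω)
    (u v w : (Fin 5 → ℝ) → ℝ)
    (hu : ContDiffOn ℝ (⊤:ℕ∞) u Ω) (hv : ContDiffOn ℝ (⊤:ℕ∞) v Ω)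
    (hw : ContDiffOn ℝ (⊤:ℕ∞) w Ω) :
    (∀ z : Fin 6 → ℝ, proj56 z ∈ Ω → z 5 ≠ 0 → ∀ a b : Fin 3,
        vbr 6 (Yf u v w a) (Yf u v w b) z ∈
          Submodule.span ℝ
            ({Yf u v w 0 z, Yf u v w 1 z, Yf u v w 2 z} : Set (Fin 6 → ℝ))) ↔
      (∀ x ∈ Ω,
        R1op u v u x = pd 5 u 0 x * pd 5 w 1 x - pd 5 u 1 x * pd 5 w 0 x
        ∧ R1op u v v x = pd 5 v 0 x * pd 5 w 1 x - pd 5 v 1 x * pd 5 w 0 x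
        ∧ R1op u v w x = 0
        ∧ R2op u v w u x = pd 5 u 0 x * pd 5 w 3 x
        ∧ R2op u v w v x = -(pd 5 u 0 x * pd 5 w 2 x)
        ∧ R2op u v w w x = pd 5 w 0 x * pd 5 w 3 x
        ∧ R3op u v w u x = pd 5 u 1 x * pd 5 w 3 x
        ∧ R3op u v w v x = -(pd 5 u 1 x * pd 5 w 2 x)
        ∧ R3op u v w w x = pd 5 w 1 x * pd 5 w 3 x) := by
  constructor
  · intro h x hx
    classical
    set z : Fin 6 → ℝ := Fin.snoc x 1 with hzdef
    have hpz : proj56 z = x := by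
      funext i; simp [proj56, hzdef, Fin.snoc_castSucc]
    have hz5 : z 5 = 1 := by
      have : (5 : Fin 6) = Fin.last 5 := rfl
      rw [hzdef, this, Fin.snoc_last]
    have hzmem : proj56 z ∈ Ω := by rw [hpz]; exact hx
    have hl5 : z 5 ≠ 0 := by rw [hz5]; norm_num
    have hu' : ContDiffAt ℝ (⊤:ℕ∞) u (proj56 z) := hu.contDiffAt (hΩ.mem_nhds hzmem)
    have hv' : ContDiffAt ℝ (⊤:ℕ∞) v (proj56 z) := hv.contDiffAt (hΩ.mem_nhds hzmem)
    have hw' : ContDiffAt ℝ (⊤:ℕ∞) w (proj56 z) := hw.contDiffAt (hΩ.mem_nhds hzmem)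
    obtain ⟨⟨a00,a01,a04⟩,⟨a10,a11,a14⟩,⟨a20,a21,a24⟩⟩ := Yf_comp u v w z
    have m0 : Yf u v w 0 z ∈ Submodule.span ℝ
        ({Yf u v w 0 z, Yf u v w 1 z, Yf u v w 2 z} : Set (Fin 6 → ℝ)) :=
      Submodule.subset_span (Set.mem_insert _ _)
    have m1 : Yf u v w 1 z ∈ Submodule.span ℝ
        ({Yf u v w 0 z, Yf u v w 1 z, Yf u v w 2 z} : Set (Fin 6 → ℝ)) :=
      Submodule.subset_span (Set.mem_insert_of_mem _ (Set.mem_insert _ _))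
    -- bracket 01
    have k01 := h z hzmem hl5 0 1
    rw [br01 hu' hv' hw'] at k01
    have r01mem : ((R1op u v u (proj56 z) - (pd 5 u 0 (proj56 z) * pd 5 w 1 (proj56 z)
          - pd 5 u 1 (proj56 z) * pd 5 w 0 (proj56 z))) • e 6 2
        + (R1op u v v (proj56 z) - (pd 5 v 0 (proj56 z) * pd 5 w 1 (proj56 z)
          - pd 5 v 1 (proj56 z) * pd 5 w 0 (proj56 z))) • e 6 3
        + (-(z 5 * R1op u v w (proj56 z))) • e 6 5) ∈ Submodule.span ℝ
        ({Yf u v w 0 z, Yf u v w 1 z, Yf u v w 2 z} : Set (Fin 6 → ℝ)) := by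
      have h2 := Submodule.sub_mem _ (Submodule.add_mem _ k01
        (Submodule.smul_mem _ (pd 5 w 1 (proj56 z)) m0))
        (Submodule.smul_mem _ (pd 5 w 0 (proj56 z)) m1)
      convert h2 using 1
      abel
    have r01 := resid_zero hl5 a00 a01 a04 a10 a11 a14 a20 a21 a24 r01mem
      (by simp [e, Pi.single_apply]) (by simp [e, Pi.single_apply]) (by simp [e, Pi.single_apply])
    have q1 : R1op u v u (proj56 z) - (pd 5 u 0 (proj56 z) * pd 5 w 1 (proj56 z)
        - pd 5 u 1 (proj56 z) * pd 5 w 0 (proj56 z)) = 0 := by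
      have := congrFun r01 2; simpa [e, Pi.single_apply] using this
    have q2 : R1op u v v (proj56 z) - (pd 5 v 0 (proj56 z) * pd 5 w 1 (proj56 z)
        - pd 5 v 1 (proj56 z) * pd 5 w 0 (proj56 z)) = 0 := by
      have := congrFun r01 3; simpa [e, Pi.single_apply] using this
    have q3 : R1op u v w (proj56 z) = 0 := by
      have := congrFun r01 5; simp [e, Pi.single_apply, hz5] at this; linarith
    -- bracket 02
    have k02 := h z hzmem hl5 0 2
    rw [br02 hu' hv' hw'] at k02
    have r02mem : ((pd 5 u 0 (proj56 z) * pd 5 w 3 (proj56 z) - R2op u v w u (proj56 z)) • e 6 2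
        + (-(R2op u v w v (proj56 z)) - pd 5 u 0 (proj56 z) * pd 5 w 2 (proj56 z)) • e 6 3
        + (z 5 * (R2op u v w w (proj56 z) - pd 5 w 0 (proj56 z) * pd 5 w 3 (proj56 z))) • e 6 5)
        ∈ Submodule.span ℝ
        ({Yf u v w 0 z, Yf u v w 1 z, Yf u v w 2 z} : Set (Fin 6 → ℝ)) := by
      have h2 := Submodule.sub_mem _ k02 (Submodule.smul_mem _ (pd 5 w 3 (proj56 z)) m0)
      convert h2 using 1
      abel
    have r02 := resid_zero hl5 a00 a01 a04 a10 a11 a14 a20 a21 a24 r02mem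
      (by simp [e, Pi.single_apply]) (by simp [e, Pi.single_apply]) (by simp [e, Pi.single_apply])
    have q4 : pd 5 u 0 (proj56 z) * pd 5 w 3 (proj56 z) - R2op u v w u (proj56 z) = 0 := by
      have := congrFun r02 2; simpa [e, Pi.single_apply] using this
    have q5 : -(R2op u v w v (proj56 z)) - pd 5 u 0 (proj56 z) * pd 5 w 2 (proj56 z) = 0 := by
      have := congrFun r02 3; simpa [e, Pi.single_apply] using this
    have q6 : R2op u v w w (proj56 z) - pd 5 w 0 (proj56 z) * pd 5 w 3 (proj56 z) = 0 := by
      have := congrFun r02 5; simp [e, Pi.single_apply, hz5] at this; linarith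
    -- bracket 12
    have k12 := h z hzmem hl5 1 2
    rw [br12 hu' hv' hw'] at k12
    have r12mem : ((pd 5 u 1 (proj56 z) * pd 5 w 3 (proj56 z) - R3op u v w u (proj56 z)) • e 6 2
        + (-(R3op u v w v (proj56 z)) - pd 5 u 1 (proj56 z) * pd 5 w 2 (proj56 z)) • e 6 3
        + (z 5 * (R3op u v w w (proj56 z) - pd 5 w 1 (proj56 z) * pd 5 w 3 (proj56 z))) • e 6 5)
        ∈ Submodule.span ℝ
        ({Yf u v w 0 z, Yf u v w 1 z, Yf u v w 2 z} : Set (Fin 6 → ℝ)) := by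
      have h2 := Submodule.sub_mem _ k12 (Submodule.smul_mem _ (pd 5 w 3 (proj56 z)) m1)
      convert h2 using 1
      abel
    have r12 := resid_zero hl5 a00 a01 a04 a10 a11 a14 a20 a21 a24 r12mem
      (by simp [e, Pi.single_apply]) (by simp [e, Pi.single_apply]) (by simp [e, Pi.single_apply])
    have q7 : pd 5 u 1 (proj56 z) * pd 5 w 3 (proj56 z) - R3op u v w u (proj56 z) = 0 := by
      have := congrFun r12 2; simpa [e, Pi.single_apply] using this
    have q8 : -(R3op u v w v (proj56 z)) - pd 5 u 1 (proj56 z) * pd 5 w 2 (proj56 z) = 0 := by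
      have := congrFun r12 3; simpa [e, Pi.single_apply] using this
    have q9 : R3op u v w w (proj56 z) - pd 5 w 1 (proj56 z) * pd 5 w 3 (proj56 z) = 0 := by
      have := congrFun r12 5; simp [e, Pi.single_apply, hz5] at this; linarith
    rw [← hpz]
    exact ⟨by linarith, by linarith, q3, by linarith, by linarith, by linarith,
      by linarith, by linarith, by linarith⟩
  · intro h z hzmem hl5 a b
    have hu' : ContDiffAt ℝ (⊤:ℕ∞) u (proj56 z) := hu.contDiffAt (hΩ.mem_nhds hzmem)
    have hv' : ContDiffAt ℝ (⊤:ℕ∞) v (proj56 z) := hv.contDiffAt (hΩ.mem_nhds hzmem)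
    have hw' : ContDiffAt ℝ (⊤:ℕ∞) w (proj56 z) := hw.contDiffAt (hΩ.mem_nhds hzmem)
    obtain ⟨q1,q2,q3,q4,q5,q6,q7,q8,q9⟩ := h (proj56 z) hzmem
    have m0 : Yf u v w 0 z ∈ Submodule.span ℝ
        ({Yf u v w 0 z, Yf u v w 1 z, Yf u v w 2 z} : Set (Fin 6 → ℝ)) :=
      Submodule.subset_span (Set.mem_insert _ _)
    have m1 : Yf u v w 1 z ∈ Submodule.span ℝ
        ({Yf u v w 0 z, Yf u v w 1 z, Yf u v w 2 z} : Set (Fin 6 → ℝ)) :=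
      Submodule.subset_span (Set.mem_insert_of_mem _ (Set.mem_insert _ _))
    have K01 : vbr 6 (Yf u v w 0) (Yf u v w 1) z ∈ Submodule.span ℝ
        ({Yf u v w 0 z, Yf u v w 1 z, Yf u v w 2 z} : Set (Fin 6 → ℝ)) := by
      rw [br01 hu' hv' hw', q1, q2, q3]
      simp only [sub_self, zero_smul, zero_add, mul_zero, neg_zero]
      exact Submodule.sub_mem _ (Submodule.smul_mem _ _ m1) (Submodule.smul_mem _ _ m0)
    have K02 : vbr 6 (Yf u v w 0) (Yf u v w 2) z ∈ Submodule.span ℝ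
        ({Yf u v w 0 z, Yf u v w 1 z, Yf u v w 2 z} : Set (Fin 6 → ℝ)) := by
      rw [br02 hu' hv' hw', q4, q5, q6]
      simp only [sub_self, zero_smul, zero_add, mul_zero, neg_neg, neg_zero]
      exact Submodule.smul_mem _ _ m0
    have K12 : vbr 6 (Yf u v w 1) (Yf u v w 2) z ∈ Submodule.span ℝ
        ({Yf u v w 0 z, Yf u v w 1 z, Yf u v w 2 z} : Set (Fin 6 → ℝ)) := by
      rw [br12 hu' hv' hw', q7, q8, q9]
      simp only [sub_self, zero_smul, zero_add, mul_zero, neg_neg, neg_zero]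
      exact Submodule.smul_mem _ _ m1
    fin_cases a <;> fin_cases b
    · rw [vbr_self]; exact Submodule.zero_mem _
    · exact K01
    · exact K02
    · rw [vbr_swap]; exact neg_mem K01
    · rw [vbr_self]; exact Submodule.zero_mem _
    · exact K12
    · rw [vbr_swap]; exact neg_mem K02
    · rw [vbr_swap]; exact neg_mem K12
    · rw [vbr_self]; exact Submodule.zero_mem _
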